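/- Deterministic pointwise linearization bounds for two-layer ReLU networks: For every x ∈ ℝ^d with ‖x‖₂ ≤ 1 and every W ∈ S_B, (i) |f(x; W) − f̂(x; W)| ≤ (2/√m) Σ_{r=1}^m 1{|W_r(0)ᵀx| ≤ ‖W_r − W_r(0)‖₂} · ‖W_r − W_r(0)‖₂, and consequently |f(x; W) − f̂(x; W)|² ≤ (4B²/m) Σ_{r=1}^m 1{|W_r(0)ᵀx| ≤ ‖W_r − W_r(0)‖₂}; and (ii) ‖∇_W f(x; W) − ∇_W f(x; W(0))‖₂² ≤ (1/m) Σ_{r=1}^m 1{|W_r(0)ᵀx| ≤ ‖W_r − W_r(0)‖₂}. -/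

import Mathlib

noncomputable section

open Finset

/-- Euclidean space of inputs. -/
abbrev Vec (d : ℕ) := EuclideanSpace ℝ (Fin d)

/-- Weight space of a width-`m` two-layer network, with the Euclidean (ℓ²) norm of the
concatenated weight vector; block `r` consists of the coordinates `(r, i)`, `i < d`. -/
abbrev Wt (m d : ℕ) := EuclideanSpace ℝ (Fin m × Fin d)

/-- Preactivation `W_rᵀ x` of neuron `r`. -/
def npre {m d : ℕ} (W : Wt m d) (x : Vec d) (r : Fin m) : ℝ := ∑ i, W (r, i) * x i

/-- Two-layer ReLU network `f(x; W) = m^{-1/2} Σ_r s_r max(W_rᵀ x, 0)`. -/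
def net {m d : ℕ} (s : Fin m → ℝ) (W : Wt m d) (x : Vec d) : ℝ :=
  (Real.sqrt m)⁻¹ * ∑ r, s r * max (npre W x r) 0

/-- Formal gradient of the network in the weights: block `r` is
`m^{-1/2} s_r 1{W_rᵀ x > 0} x`. -/
def netGrad {m d : ℕ} (s : Fin m → ℝ) (W : Wt m d) (x : Vec d) : Wt m d :=
  WithLp.toLp 2 (fun p : Fin m × Fin d => (Real.sqrt m)⁻¹ * s p.1 * (if 0 < npre W x p.1 then x p.2 else 0))

/-- Linearization of the network at `W(0)`:
`f̂(x; W) = f(x; W(0)) + ⟨∇_W f(x; W(0)), W − W(0)⟩`. -/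
def netLin {m d : ℕ} (s : Fin m → ℝ) (W0 W : Wt m d) (x : Vec d) : ℝ :=
  net s W0 x + ∑ p : Fin m × Fin d, netGrad s W0 x p * (W p - W0 p)

/-- Norm `‖W_r − W_r(0)‖₂` of the `r`-th block of `W − W(0)`. -/
def bdiff {m d : ℕ} (W W0 : Wt m d) (r : Fin m) : ℝ :=
  Real.sqrt (∑ i, (W (r, i) - W0 (r, i)) ^ 2)

/-- Deterministic pointwise linearization bounds for two-layer ReLU networks:
for `‖x‖ ≤ 1` and `W ∈ S_B`,
(i) `|f(x;W) − f̂(x;W)| ≤ (2/√m) Σ_r 1{|W_r(0)ᵀx| ≤ ‖W_r − W_r(0)‖} ‖W_r − W_r(0)‖`,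
hence `|f(x;W) − f̂(x;W)|² ≤ (4B²/m) Σ_r 1{|W_r(0)ᵀx| ≤ ‖W_r − W_r(0)‖}`; and
(ii) `‖∇_W f(x;W) − ∇_W f(x;W(0))‖² ≤ (1/m) Σ_r 1{|W_r(0)ᵀx| ≤ ‖W_r − W_r(0)‖}`. -/
theorem stmt_3
    {m d : ℕ} (hm : 0 < m) (B : ℝ) (hB : 0 < B)
    (s : Fin m → ℝ) (hs : ∀ r, s r = 1 ∨ s r = -1)
    (W0 W : Wt m d) (hW : ‖W - W0‖ ≤ B)
    (x : Vec d) (hx : ‖x‖ ≤ 1) :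
    |net s W x - netLin s W0 W x|
        ≤ (2 / Real.sqrt m) *
          ∑ r, (if |npre W0 x r| ≤ bdiff W W0 r then bdiff W W0 r else 0)
    ∧ |net s W x - netLin s W0 W x| ^ 2
        ≤ (4 * B ^ 2 / m) *
          ∑ r, (if |npre W0 x r| ≤ bdiff W W0 r then (1 : ℝ) else 0)
    ∧ ∑ p : Fin m × Fin d, (netGrad s W x p - netGrad s W0 x p) ^ 2
        ≤ (1 / m) * ∑ r, (if |npre W0 x r| ≤ bdiff W W0 r then (1 : ℝ) else 0) := by
  have hm' : (0 : ℝ) < m := by exact_mod_cast hm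
  have hsm : (0 : ℝ) < Real.sqrt m := Real.sqrt_pos.mpr hm'
  have hsm2 : (Real.sqrt m) ^ 2 = (m : ℝ) := Real.sq_sqrt (le_of_lt hm')
  set a : Fin m → ℝ := npre W0 x with ha
  set b : Fin m → ℝ := npre W x with hb
  set c : Fin m → ℝ := bdiff W W0 with hc
  have hc0 : ∀ r, 0 ≤ c r := fun r => Real.sqrt_nonneg _
  -- ∑ x i ^ 2 ≤ 1
  have hx2 : ∑ i, x i ^ 2 ≤ 1 := by
    have h1 : ‖x‖ = Real.sqrt (∑ i, x i ^ 2) := by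
      rw [EuclideanSpace.norm_eq]
      simp [Real.norm_eq_abs, sq_abs]
    have h2 : Real.sqrt (∑ i, x i ^ 2) ≤ 1 := h1 ▸ hx
    nlinarith [Real.sq_sqrt (by positivity : (0:ℝ) ≤ ∑ i, x i ^ 2),
      Real.sqrt_nonneg (∑ i, x i ^ 2)]
  -- u_r expression and bound
  have hueq : ∀ r, b r - a r = ∑ i, (W (r, i) - W0 (r, i)) * x i := by
    intro r
    simp only [hb, ha, npre, ← Finset.sum_sub_distrib, sub_mul]
  have hcsq : ∀ r, c r ^ 2 = ∑ i, (W (r, i) - W0 (r, i)) ^ 2 := by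
    intro r
    exact Real.sq_sqrt (by positivity)
  have hu : ∀ r, |b r - a r| ≤ c r := by
    intro r
    have hcs := Finset.sum_mul_sq_le_sq_mul_sq Finset.univ
      (fun i => W (r, i) - W0 (r, i)) (fun i => x i)
    have h1 : (b r - a r) ^ 2 ≤ c r ^ 2 := by
      rw [hueq r, hcsq r]
      calc (∑ i, (W (r, i) - W0 (r, i)) * x i) ^ 2
          ≤ (∑ i, (W (r, i) - W0 (r, i)) ^ 2) * ∑ i, x i ^ 2 := hcs
        _ ≤ (∑ i, (W (r, i) - W0 (r, i)) ^ 2) * 1 := by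
            apply mul_le_mul_of_nonneg_left hx2 (by positivity)
        _ = ∑ i, (W (r, i) - W0 (r, i)) ^ 2 := mul_one _
    exact abs_le.mpr (abs_le_of_sq_le_sq' h1 (hc0 r))
  -- total block norm bound
  have hsumc : ∑ r, c r ^ 2 ≤ B ^ 2 := by
    have hWnorm : ‖W - W0‖ = Real.sqrt (∑ p : Fin m × Fin d, (W p - W0 p) ^ 2) := by
      rw [EuclideanSpace.norm_eq]
      congr 1
      refine Finset.sum_congr rfl fun p _ => ?_
      simp [Real.norm_eq_abs, sq_abs]
    have h1 : ∑ r, c r ^ 2 = ∑ p : Fin m × Fin d, (W p - W0 p) ^ 2 := by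
      rw [Fintype.sum_prod_type]
      exact Finset.sum_congr rfl fun r _ => hcsq r
    have h2 : Real.sqrt (∑ p : Fin m × Fin d, (W p - W0 p) ^ 2) ≤ B := hWnorm ▸ hW
    rw [h1]
    nlinarith [Real.sq_sqrt (by positivity : (0:ℝ) ≤ ∑ p : Fin m × Fin d, (W p - W0 p) ^ 2),
      Real.sqrt_nonneg (∑ p : Fin m × Fin d, (W p - W0 p) ^ 2)]
  -- gradient inner product term
  have hgrad : ∑ p : Fin m × Fin d, netGrad s W0 x p * (W p - W0 p)
      = (Real.sqrt m)⁻¹ * ∑ r, s r * (if 0 < a r then b r - a r else 0) := by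
    rw [Fintype.sum_prod_type, Finset.mul_sum]
    refine Finset.sum_congr rfl fun r _ => ?_
    simp only [netGrad]
    by_cases h : 0 < a r
    · simp only [ha] at h; simp only [ha, h, if_pos]
      rw [show npre W x r - npre W0 x r = ∑ i, (W (r, i) - W0 (r, i)) * x i from hueq r]
      rw [Finset.mul_sum, Finset.mul_sum]
      exact Finset.sum_congr rfl fun i _ => by ring
    · simp only [ha] at h
      simp [h, ha]
  -- decomposition of the error
  have hdiff : net s W x - netLin s W0 W x
      = (Real.sqrt m)⁻¹ * ∑ r, s r *
          (max (b r) 0 - max (a r) 0 - (if 0 < a r then b r - a r else 0)) := by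
    simp only [netLin, net, hgrad]
    rw [← ha, ← hb]
    rw [show (∑ r, s r * (max (b r) 0 - max (a r) 0 - (if 0 < a r then b r - a r else 0)))
        = (∑ r, s r * max (b r) 0) - (∑ r, s r * max (a r) 0)
          - ∑ r, s r * (if 0 < a r then b r - a r else 0) from by
      rw [← Finset.sum_sub_distrib, ← Finset.sum_sub_distrib]
      exact Finset.sum_congr rfl fun r _ => by ring]
    ring
  -- per-neuron bound
  have key : ∀ r, |s r * (max (b r) 0 - max (a r) 0 - (if 0 < a r then b r - a r else 0))|
      ≤ 2 * (if |a r| ≤ c r then c r else 0) := by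
    intro r
    have hsr : |s r| = 1 := by rcases hs r with h | h <;> simp [h]
    rw [abs_mul, hsr, one_mul]
    by_cases hac : |a r| ≤ c r
    · rw [if_pos hac]
      have h1 : |max (b r) 0 - max (a r) 0| ≤ |b r - a r| := abs_max_sub_max_le_abs _ _ _
      have h2 : |if 0 < a r then b r - a r else 0| ≤ |b r - a r| := by
        split <;> simp [abs_nonneg]
      calc |max (b r) 0 - max (a r) 0 - (if 0 < a r then b r - a r else 0)|
          ≤ |max (b r) 0 - max (a r) 0| + |if 0 < a r then b r - a r else 0| :=
            abs_sub _ _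
        _ ≤ |b r - a r| + |b r - a r| := add_le_add h1 h2
        _ ≤ c r + c r := add_le_add (hu r) (hu r)
        _ = 2 * c r := by ring
    · rw [if_neg hac]
      push_neg at hac
      have hua : |b r - a r| < |a r| := lt_of_le_of_lt (hu r) hac
      by_cases hpos : 0 < a r
      · have hbpos : 0 < b r := by
          have : |a r| = a r := abs_of_pos hpos
          have := abs_lt.mp hua
          linarith [this.1]
        rw [if_pos hpos, max_eq_left (le_of_lt hbpos), max_eq_left (le_of_lt hpos)]
        simp
      · have haneg : a r < 0 := by
          rcases lt_or_eq_of_le (not_lt.mp hpos) with h | h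
          · exact h
          · exfalso; rw [h] at hac; simp at hac; linarith [hc0 r]
        have hbneg : b r ≤ 0 := by
          have : |a r| = -(a r) := abs_of_neg haneg
          have := abs_lt.mp hua
          linarith [this.2]
        rw [if_neg hpos, max_eq_right hbneg, max_eq_right (le_of_lt haneg)]
        simp
  -- first bound
  have bound1 : |net s W x - netLin s W0 W x|
      ≤ (2 / Real.sqrt m) * ∑ r, (if |a r| ≤ c r then c r else 0) := by
    rw [hdiff, abs_mul, abs_of_pos (inv_pos.mpr hsm)]
    calc (Real.sqrt m)⁻¹ * |∑ r, s r *
          (max (b r) 0 - max (a r) 0 - (if 0 < a r then b r - a r else 0))|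
        ≤ (Real.sqrt m)⁻¹ * ∑ r, |s r *
          (max (b r) 0 - max (a r) 0 - (if 0 < a r then b r - a r else 0))| := by
          apply mul_le_mul_of_nonneg_left (Finset.abs_sum_le_sum_abs _ _)
            (le_of_lt (inv_pos.mpr hsm))
      _ ≤ (Real.sqrt m)⁻¹ * ∑ r, 2 * (if |a r| ≤ c r then c r else 0) := by
          apply mul_le_mul_of_nonneg_left (Finset.sum_le_sum fun r _ => key r)
            (le_of_lt (inv_pos.mpr hsm))
      _ = (2 / Real.sqrt m) * ∑ r, (if |a r| ≤ c r then c r else 0) := by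
          rw [← Finset.mul_sum]; ring
  refine ⟨bound1, ?_, ?_⟩
  · -- second bound
    set T := ∑ r, (if |a r| ≤ c r then c r else 0) with hT
    set N := ∑ r, (if |a r| ≤ c r then (1:ℝ) else 0) with hN
    have hT0 : 0 ≤ T := Finset.sum_nonneg fun r _ => by split <;> [exact hc0 r; exact le_rfl]
    have hN0 : 0 ≤ N := Finset.sum_nonneg fun r _ => by split <;> norm_num
    have hTsq : T ^ 2 ≤ N * B ^ 2 := by
      have hcs := Finset.sum_mul_sq_le_sq_mul_sq Finset.univ
        (fun r => if |a r| ≤ c r then (1:ℝ) else 0)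
        (fun r => if |a r| ≤ c r then c r else 0)
      have e1 : ∑ r, (if |a r| ≤ c r then (1:ℝ) else 0) * (if |a r| ≤ c r then c r else 0)
          = T := Finset.sum_congr rfl fun r _ => by split <;> simp
      have e2 : ∑ r, (if |a r| ≤ c r then (1:ℝ) else 0) ^ 2 = N :=
        Finset.sum_congr rfl fun r _ => by split <;> norm_num
      have e3 : ∑ r, (if |a r| ≤ c r then c r else 0) ^ 2 ≤ B ^ 2 := by
        refine le_trans (Finset.sum_le_sum fun r _ => ?_) hsumc
        split <;> [exact le_rfl; simpa using sq_nonneg (c r)]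
      calc T ^ 2 ≤ N * ∑ r, (if |a r| ≤ c r then c r else 0) ^ 2 := by
            rw [← e1, ← e2]; exact hcs
        _ ≤ N * B ^ 2 := mul_le_mul_of_nonneg_left e3 hN0
    have h1 : |net s W x - netLin s W0 W x| ^ 2 ≤ ((2 / Real.sqrt m) * T) ^ 2 := by
      apply pow_le_pow_left₀ (abs_nonneg _) bound1
    calc |net s W x - netLin s W0 W x| ^ 2
        ≤ ((2 / Real.sqrt m) * T) ^ 2 := h1
      _ = (4 / m) * T ^ 2 := by
          rw [mul_pow, div_pow, hsm2]; ring
      _ ≤ (4 / m) * (N * B ^ 2) := by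
          apply mul_le_mul_of_nonneg_left hTsq (by positivity)
      _ = (4 * B ^ 2 / m) * N := by ring
  · -- gradient bound
    have hb3 : ∀ r, ∑ i, (netGrad s W x (r, i) - netGrad s W0 x (r, i)) ^ 2
        ≤ (1 / m) * (if |a r| ≤ c r then (1:ℝ) else 0) := by
      intro r
      have hs2 : (s r) ^ 2 = 1 := by rcases hs r with h | h <;> simp [h]
      have hsum : ∑ i : Fin d, ((Real.sqrt m)⁻¹ * s r * x i) ^ 2 ≤ 1 / m := by
        have e : ∀ i : Fin d, ((Real.sqrt m)⁻¹ * s r * x i) ^ 2 = (m:ℝ)⁻¹ * x i ^ 2 := by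
          intro i
          rw [mul_pow, mul_pow, inv_pow, hsm2, hs2, mul_one]
        rw [Finset.sum_congr rfl fun i _ => e i, ← Finset.mul_sum]
        calc (m:ℝ)⁻¹ * ∑ i, x i ^ 2 ≤ (m:ℝ)⁻¹ * 1 :=
            mul_le_mul_of_nonneg_left hx2 (by positivity)
          _ = 1 / m := by ring
      by_cases hA : 0 < npre W0 x r <;> by_cases hB' : 0 < npre W x r
      · have e : ∀ i : Fin d, netGrad s W x (r, i) - netGrad s W0 x (r, i) = 0 := by
          intro i
          show (Real.sqrt m)⁻¹ * s r * (if 0 < npre W x r then x i else 0)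
              - (Real.sqrt m)⁻¹ * s r * (if 0 < npre W0 x r then x i else 0) = 0
          rw [if_pos hB', if_pos hA]; ring
        have hz : ∑ i : Fin d, (netGrad s W x (r, i) - netGrad s W0 x (r, i)) ^ 2 = 0 :=
          Finset.sum_eq_zero fun i _ => by rw [e i]; norm_num
        rw [hz]
        split <;> positivity
      · have hle : |a r| ≤ c r := by
          refine le_trans ?_ (hu r)
          rw [abs_of_pos hA, abs_sub_comm]
          calc a r = (a r - b r) + b r := by ring
            _ ≤ |a r - b r| + 0 := add_le_add (le_abs_self _) (not_lt.mp hB')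
            _ = |a r - b r| := by ring
        rw [if_pos hle, mul_one]
        have e : ∀ i : Fin d, netGrad s W x (r, i) - netGrad s W0 x (r, i)
            = -((Real.sqrt m)⁻¹ * s r * x i) := by
          intro i
          show (Real.sqrt m)⁻¹ * s r * (if 0 < npre W x r then x i else 0)
              - (Real.sqrt m)⁻¹ * s r * (if 0 < npre W0 x r then x i else 0) = _
          rw [if_neg hB', if_pos hA]; ring
        calc ∑ i : Fin d, (netGrad s W x (r, i) - netGrad s W0 x (r, i)) ^ 2
            = ∑ i : Fin d, ((Real.sqrt m)⁻¹ * s r * x i) ^ 2 :=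
              Finset.sum_congr rfl fun i _ => by rw [e i, neg_sq]
          _ ≤ 1 / m := hsum
      · have hle : |a r| ≤ c r := by
          refine le_trans ?_ (hu r)
          rw [abs_of_nonpos (not_lt.mp hA)]
          calc -(a r) = (b r - a r) - b r := by ring
            _ ≤ |b r - a r| - 0 := sub_le_sub (le_abs_self _) (le_of_lt hB')
            _ = |b r - a r| := by ring
        rw [if_pos hle, mul_one]
        have e : ∀ i : Fin d, netGrad s W x (r, i) - netGrad s W0 x (r, i)
            = (Real.sqrt m)⁻¹ * s r * x i := by
          intro i
          show (Real.sqrt m)⁻¹ * s r * (if 0 < npre W x r then x i else 0)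
              - (Real.sqrt m)⁻¹ * s r * (if 0 < npre W0 x r then x i else 0) = _
          rw [if_pos hB', if_neg hA]; ring
        calc ∑ i : Fin d, (netGrad s W x (r, i) - netGrad s W0 x (r, i)) ^ 2
            = ∑ i : Fin d, ((Real.sqrt m)⁻¹ * s r * x i) ^ 2 :=
              Finset.sum_congr rfl fun i _ => by rw [e i]
          _ ≤ 1 / m := hsum
      · have e : ∀ i : Fin d, netGrad s W x (r, i) - netGrad s W0 x (r, i) = 0 := by
          intro i
          show (Real.sqrt m)⁻¹ * s r * (if 0 < npre W x r then x i else 0)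
              - (Real.sqrt m)⁻¹ * s r * (if 0 < npre W0 x r then x i else 0) = 0
          rw [if_neg hB', if_neg hA]; ring
        have hz : ∑ i : Fin d, (netGrad s W x (r, i) - netGrad s W0 x (r, i)) ^ 2 = 0 :=
          Finset.sum_eq_zero fun i _ => by rw [e i]; norm_num
        rw [hz]
        split <;> positivity
    calc ∑ p : Fin m × Fin d, (netGrad s W x p - netGrad s W0 x p) ^ 2
        = ∑ r, ∑ i, (netGrad s W x (r, i) - netGrad s W0 x (r, i)) ^ 2 :=
          Fintype.sum_prod_type _
      _ ≤ ∑ r, (1 / m) * (if |a r| ≤ c r then (1:ℝ) else 0) :=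
          Finset.sum_le_sum fun r _ => hb3 r
      _ = (1 / m) * ∑ r, (if |a r| ≤ c r then (1:ℝ) else 0) := by
          rw [Finset.mul_sum]
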